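/- Let v and v̂ be real-valued random variables on a probability space with v ≥ 0 almost surely, v integrable, and |v − v̂| ≤ M almost surely for some constant M > 0. Then for every K > 0 with P(v > K + M) > 0 (which implies P(v̂ > K) > 0), E[v · 1{v̂ > K}] / P(v̂ > K) ≤ (K + M) + E[v · 1{v > K + M}] / P(v > K + M); equivalently, E[v | v̂ > K] ≤ (K + M) + E[v | v > K + M]. -/

import Mathlib

open MeasureTheory

/-- Let `v, v̂` be real random variables with `v ≥ 0` a.s., `v` integrable,
and `|v - v̂| ≤ M` a.s. for some `M > 0`. Then for every `K > 0` with
`P(v > K + M) > 0` (which implies `P(v̂ > K) > 0`),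
`E[v · 1{v̂ > K}] / P(v̂ > K) ≤ (K + M) + E[v · 1{v > K + M}] / P(v > K + M)`,
i.e. `E[v | v̂ > K] ≤ (K + M) + E[v | v > K + M]`. -/
theorem stmt_12
    {Ω : Type*} [MeasurableSpace Ω] (μ : Measure Ω) [IsProbabilityMeasure μ]
    (v vh : Ω → ℝ) (hv_meas : Measurable v) (hvh_meas : Measurable vh)
    (hv_nonneg : ∀ᵐ ω ∂μ, 0 ≤ v ω) (hv_int : Integrable v μ)
    (M : ℝ) (hM : 0 < M) (herr : ∀ᵐ ω ∂μ, |v ω - vh ω| ≤ M) :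
    ∀ K : ℝ, 0 < K → 0 < μ {ω | K + M < v ω} →
      0 < μ {ω | K < vh ω} ∧
      (∫ ω in {ω | K < vh ω}, v ω ∂μ) / (μ {ω | K < vh ω}).toReal ≤
        (K + M) + (∫ ω in {ω | K + M < v ω}, v ω ∂μ) / (μ {ω | K + M < v ω}).toReal := by
  intro K hK hB
  set A : Set Ω := {ω | K < vh ω} with hA_def
  set B : Set Ω := {ω | K + M < v ω} with hB_def
  have hA_meas : MeasurableSet A := measurableSet_lt measurable_const hvh_meas
  have hB_meas : MeasurableSet B := measurableSet_lt measurable_const hv_meas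
  -- a.e., B ⊆ A
  have hBA : ∀ᵐ ω ∂μ, ω ∈ B → ω ∈ A := by
    filter_upwards [herr] with ω hω hωB
    have h1 : v ω - vh ω ≤ M := (abs_le.mp hω).2
    have : K + M < v ω := hωB
    simp only [hA_def, Set.mem_setOf_eq]
    linarith
  have hμBA : μ B ≤ μ A := measure_mono_ae hBA
  have hApos : 0 < μ A := lt_of_lt_of_le hB hμBA
  refine ⟨hApos, ?_⟩
  have hAfin : μ A ≠ ⊤ := measure_ne_top μ A
  have hBfin : μ B ≠ ⊤ := measure_ne_top μ B
  set a := (μ A).toReal with ha_def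
  set b := (μ B).toReal with hb_def
  have ha_pos : 0 < a := ENNReal.toReal_pos hApos.ne' hAfin
  have hb_pos : 0 < b := ENNReal.toReal_pos hB.ne' hBfin
  have hba : b ≤ a := ENNReal.toReal_le_toReal hBfin hAfin |>.mpr hμBA
  -- split the integral over A
  have hsplit : A = (A \ B) ∪ (A ∩ B) := by
    ext ω; by_cases h : ω ∈ B <;> simp [h]
  have hdisj : Disjoint (A \ B) (A ∩ B) :=
    Set.disjoint_of_subset_right Set.inter_subset_right Set.disjoint_sdiff_left
  have hint1 : IntegrableOn v (A \ B) μ := hv_int.integrableOn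
  have hint2 : IntegrableOn v (A ∩ B) μ := hv_int.integrableOn
  have heq : (∫ ω in A, v ω ∂μ) = (∫ ω in A \ B, v ω ∂μ) + (∫ ω in A ∩ B, v ω ∂μ) := by
    conv_lhs => rw [hsplit]
    exact setIntegral_union hdisj (hA_meas.inter hB_meas) hint1 hint2
  -- bound on A \ B
  have hbd1 : (∫ ω in A \ B, v ω ∂μ) ≤ (K + M) * (μ (A \ B)).toReal := by
    have : (∫ ω in A \ B, v ω ∂μ) ≤ ∫ _ω in A \ B, (K + M) ∂μ := by
      apply setIntegral_mono_on hint1 (integrableOn_const (measure_ne_top μ _))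
        (hA_meas.diff hB_meas)
      intro ω hω
      have : ¬ (K + M < v ω) := hω.2
      linarith [not_lt.mp this]
    simpa [mul_comm, measureReal_def] using this
  have hbd1' : (K + M) * (μ (A \ B)).toReal ≤ (K + M) * a := by
    apply mul_le_mul_of_nonneg_left _ (by linarith)
    exact ENNReal.toReal_le_toReal (measure_ne_top μ _) hAfin |>.mpr
      (measure_mono Set.diff_subset)
  -- bound on A ∩ B by integral over B
  have hbd2 : (∫ ω in A ∩ B, v ω ∂μ) ≤ (∫ ω in B, v ω ∂μ) :=
    setIntegral_mono_set hv_int.integrableOn (ae_restrict_of_ae hv_nonneg)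
      (Filter.Eventually.of_forall Set.inter_subset_right)
  have hIB_nonneg : 0 ≤ (∫ ω in B, v ω ∂μ) :=
    setIntegral_nonneg_ae hB_meas (by filter_upwards [hv_nonneg] with ω h _; exact h)
  have hIA : (∫ ω in A, v ω ∂μ) ≤ (K + M) * a + (∫ ω in B, v ω ∂μ) := by
    rw [heq]; linarith
  calc (∫ ω in A, v ω ∂μ) / a
      ≤ ((K + M) * a + (∫ ω in B, v ω ∂μ)) / a := by gcongr
    _ = (K + M) + (∫ ω in B, v ω ∂μ) / a := by
        field_simp
    _ ≤ (K + M) + (∫ ω in B, v ω ∂μ) / b := by gcongr
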